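/- There is a bijection between the set of multiple self-avoiding polygons in the m×n grid and the set of nontrivial polygon (m,n)-mosaics, i.e., suitably connected m×n matrices of the seven polygon mosaic tiles with no connection points on the outer boundary edges, excluding the all-T1 matrix. In particular, the number of suitably connected m×n tile matrices with no boundary connection points equals p_{m×n} + 1. -/

import Mathlib

/-- Adjacency in the `m × n` grid graph: two lattice points at Euclidean distance 1. -/
def gridAdj (m n : ℕ) (a b : Fin m × Fin n) : Prop :=
  (a.1 = b.1 ∧ ((a.2 : ℕ) + 1 = (b.2 : ℕ) ∨ (b.2 : ℕ) + 1 = (a.2 : ℕ))) ∨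
  (a.2 = b.2 ∧ ((a.1 : ℕ) + 1 = (b.1 : ℕ) ∨ (b.1 : ℕ) + 1 = (a.1 : ℕ)))

instance (m n : ℕ) (a b : Fin m × Fin n) : Decidable (gridAdj m n a b) := by
  unfold gridAdj; infer_instance

/-- The `m × n` grid graph on vertex set `{1,…,m} × {1,…,n}`. -/
def gridGraph (m n : ℕ) : SimpleGraph (Fin m × Fin n) where
  Adj := gridAdj m n
  symm := by constructor; intro a b h; unfold gridAdj at *; tauto
  loopless := by
    constructor
    intro a h
    rcases h with ⟨_, h⟩ | ⟨_, h⟩ <;> omega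

instance (m n : ℕ) : DecidableRel (gridGraph m n).Adj :=
  fun a b => inferInstanceAs (Decidable (gridAdj m n a b))

/-- The set of multiple self-avoiding polygons in the `m × n` grid:
nonempty edge subsets of the grid graph in which every vertex has degree 0 or 2. -/
def msapFinset (m n : ℕ) : Finset (Finset (Sym2 (Fin m × Fin n))) :=
  ((gridGraph m n).edgeFinset.powerset).filter
    (fun S => S ≠ ∅ ∧ ∀ v : Fin m × Fin n,
      (S.filter (fun e => v ∈ e)).card = 0 ∨ (S.filter (fun e => v ∈ e)).card = 2)

/-- `p_{m×n}`, the number of multiple self-avoiding polygons in the `m × n` grid. -/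
def msapCount (m n : ℕ) : ℕ := (msapFinset m n).card

/-- The seven polygon mosaic tiles. -/
inductive Tile | T1 | T2 | T3 | T4 | T5 | T6 | T7
  deriving DecidableEq

instance : Fintype Tile :=
  ⟨{.T1, .T2, .T3, .T4, .T5, .T6, .T7}, by intro x; cases x <;> simp⟩

/-- Connection point on the left edge. -/
def cpL : Tile → Bool
  | .T2 => true | .T5 => true | .T6 => true | _ => false

/-- Connection point on the top edge. -/
def cpT : Tile → Bool
  | .T4 => true | .T5 => true | .T7 => true | _ => false

/-- Connection point on the right edge. -/
def cpR : Tile → Bool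
  | .T2 => true | .T3 => true | .T7 => true | _ => false

/-- Connection point on the bottom edge. -/
def cpB : Tile → Bool
  | .T3 => true | .T4 => true | .T6 => true | _ => false

/-- Connection-point data (left, top, right, bottom) of a tile. -/
def cp (X : Tile) : Bool × Bool × Bool × Bool := (cpL X, cpT X, cpR X, cpB X)

/-- A polygon (m,n)-mosaic: a suitably connected m×n matrix of mosaic tiles with
no connection point on the boundary edges. -/
def IsPolygonMosaic (m n : ℕ) (M : Fin m → Fin n → Tile) : Prop :=
  (∀ (i : Fin m) (j j' : Fin n), (j : ℕ) + 1 = (j' : ℕ) → cpR (M i j) = cpL (M i j')) ∧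
  (∀ (i i' : Fin m) (j : Fin n), (i : ℕ) + 1 = (i' : ℕ) → cpB (M i j) = cpT (M i' j)) ∧
  (∀ (i : Fin m) (j : Fin n),
    ((j : ℕ) = 0 → cpL (M i j) = false) ∧
    ((j : ℕ) = n - 1 → cpR (M i j) = false) ∧
    ((i : ℕ) = 0 → cpT (M i j) = false) ∧
    ((i : ℕ) = m - 1 → cpB (M i j) = false))

instance (m n : ℕ) : DecidablePred (IsPolygonMosaic m n) := fun M => by
  unfold IsPolygonMosaic; infer_instance

/-- The finset of all polygon (m,n)-mosaics. -/
def polygonMosaics (m n : ℕ) : Finset (Fin m → Fin n → Tile) :=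
  Finset.univ.filter (IsPolygonMosaic m n)

namespace MsapAux

open Finset

variable {m n : ℕ}

abbrev ES (m n : ℕ) := Finset (Sym2 (Fin m × Fin n))

def eL (S : ES m n) (v : Fin m × Fin n) : Prop :=
  ∃ w : Fin m × Fin n, (w.1 : ℕ) = (v.1 : ℕ) ∧ (w.2 : ℕ) + 1 = (v.2 : ℕ) ∧ s(v, w) ∈ S
def eT (S : ES m n) (v : Fin m × Fin n) : Prop :=
  ∃ w : Fin m × Fin n, (w.2 : ℕ) = (v.2 : ℕ) ∧ (w.1 : ℕ) + 1 = (v.1 : ℕ) ∧ s(v, w) ∈ S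
def eR (S : ES m n) (v : Fin m × Fin n) : Prop :=
  ∃ w : Fin m × Fin n, (w.1 : ℕ) = (v.1 : ℕ) ∧ (v.2 : ℕ) + 1 = (w.2 : ℕ) ∧ s(v, w) ∈ S
def eB (S : ES m n) (v : Fin m × Fin n) : Prop :=
  ∃ w : Fin m × Fin n, (w.2 : ℕ) = (v.2 : ℕ) ∧ (v.1 : ℕ) + 1 = (w.1 : ℕ) ∧ s(v, w) ∈ S

instance (S : ES m n) (v : Fin m × Fin n) : Decidable (eL S v) := by unfold eL; infer_instance
instance (S : ES m n) (v : Fin m × Fin n) : Decidable (eT S v) := by unfold eT; infer_instance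
instance (S : ES m n) (v : Fin m × Fin n) : Decidable (eR S v) := by unfold eR; infer_instance
instance (S : ES m n) (v : Fin m × Fin n) : Decidable (eB S v) := by unfold eB; infer_instance

lemma eL_iff (S : ES m n) (v b : Fin m × Fin n) (h1 : (b.1 : ℕ) = (v.1 : ℕ))
    (h2 : (b.2 : ℕ) + 1 = (v.2 : ℕ)) : eL S v ↔ s(v, b) ∈ S := by
  constructor
  · rintro ⟨w, hw1, hw2, hw3⟩
    have : w = b := Prod.ext_iff.mpr ⟨Fin.ext (by omega), Fin.ext (by omega)⟩
    rwa [this] at hw3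
  · intro h; exact ⟨b, h1, h2, h⟩

lemma eT_iff (S : ES m n) (v b : Fin m × Fin n) (h1 : (b.2 : ℕ) = (v.2 : ℕ))
    (h2 : (b.1 : ℕ) + 1 = (v.1 : ℕ)) : eT S v ↔ s(v, b) ∈ S := by
  constructor
  · rintro ⟨w, hw1, hw2, hw3⟩
    have : w = b := Prod.ext_iff.mpr ⟨Fin.ext (by omega), Fin.ext (by omega)⟩
    rwa [this] at hw3
  · intro h; exact ⟨b, h1, h2, h⟩

lemma eR_iff (S : ES m n) (v b : Fin m × Fin n) (h1 : (b.1 : ℕ) = (v.1 : ℕ))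
    (h2 : (v.2 : ℕ) + 1 = (b.2 : ℕ)) : eR S v ↔ s(v, b) ∈ S := by
  constructor
  · rintro ⟨w, hw1, hw2, hw3⟩
    have : w = b := Prod.ext_iff.mpr ⟨Fin.ext (by omega), Fin.ext (by omega)⟩
    rwa [this] at hw3
  · intro h; exact ⟨b, h1, h2, h⟩

lemma eB_iff (S : ES m n) (v b : Fin m × Fin n) (h1 : (b.2 : ℕ) = (v.2 : ℕ))
    (h2 : (v.1 : ℕ) + 1 = (b.1 : ℕ)) : eB S v ↔ s(v, b) ∈ S := by
  constructor
  · rintro ⟨w, hw1, hw2, hw3⟩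
    have : w = b := Prod.ext_iff.mpr ⟨Fin.ext (by omega), Fin.ext (by omega)⟩
    rwa [this] at hw3
  · intro h; exact ⟨b, h1, h2, h⟩

lemma eL_false (S : ES m n) (v : Fin m × Fin n) (h : (v.2 : ℕ) = 0) : ¬ eL S v := by
  rintro ⟨w, _, h2, _⟩; omega

lemma eT_false (S : ES m n) (v : Fin m × Fin n) (h : (v.1 : ℕ) = 0) : ¬ eT S v := by
  rintro ⟨w, _, h2, _⟩; omega

lemma eR_false (S : ES m n) (v : Fin m × Fin n) (h : (v.2 : ℕ) = n - 1) : ¬ eR S v := by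
  rintro ⟨w, _, h2, _⟩
  have := w.2.isLt; have := v.2.isLt; omega

lemma eB_false (S : ES m n) (v : Fin m × Fin n) (h : (v.1 : ℕ) = m - 1) : ¬ eB S v := by
  rintro ⟨w, _, h2, _⟩
  have := w.1.isLt; have := v.1.isLt; omega

lemma degree_eq (S : ES m n) (hS : S ⊆ (gridGraph m n).edgeFinset) (v : Fin m × Fin n) :
    (S.filter (fun e => v ∈ e)).card =
      (decide (eL S v)).toNat + (decide (eT S v)).toNat +
        (decide (eR S v)).toNat + (decide (eB S v)).toNat := by
  classical
  have hstep1 : S.filter (fun e => v ∈ e)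
      = (Finset.univ.filter (fun w : Fin m × Fin n => s(v, w) ∈ S)).image (fun w => s(v, w)) := by
    ext e
    simp only [Finset.mem_filter, Finset.mem_image, Finset.mem_univ, true_and]
    constructor
    · rintro ⟨heS, hve⟩
      obtain ⟨w, rfl⟩ := Sym2.mem_iff_exists.mp hve
      exact ⟨w, heS, rfl⟩
    · rintro ⟨w, hw, rfl⟩
      exact ⟨hw, Sym2.mem_mk_left v w⟩
  rw [hstep1, Finset.card_image_of_injOn (by
    intro w _ w' _ hww
    rcases Sym2.eq_iff.mp hww with ⟨_, h⟩ | ⟨h1, h2⟩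
    · exact h
    · exact h2.trans h1)]
  have hsplit : (Finset.univ.filter (fun w : Fin m × Fin n => s(v, w) ∈ S)) =
      (Finset.univ.filter (fun w : Fin m × Fin n =>
        (w.1 : ℕ) = (v.1 : ℕ) ∧ (w.2 : ℕ) + 1 = (v.2 : ℕ) ∧ s(v, w) ∈ S)) ∪
      (Finset.univ.filter (fun w : Fin m × Fin n =>
        (w.2 : ℕ) = (v.2 : ℕ) ∧ (w.1 : ℕ) + 1 = (v.1 : ℕ) ∧ s(v, w) ∈ S)) ∪
      (Finset.univ.filter (fun w : Fin m × Fin n =>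
        (w.1 : ℕ) = (v.1 : ℕ) ∧ (v.2 : ℕ) + 1 = (w.2 : ℕ) ∧ s(v, w) ∈ S)) ∪
      (Finset.univ.filter (fun w : Fin m × Fin n =>
        (w.2 : ℕ) = (v.2 : ℕ) ∧ (v.1 : ℕ) + 1 = (w.1 : ℕ) ∧ s(v, w) ∈ S)) := by
    ext w
    simp only [Finset.mem_filter, Finset.mem_union, Finset.mem_univ, true_and]
    constructor
    · intro hw
      have hadj : gridAdj m n v w := by
        have := hS hw
        rwa [SimpleGraph.mem_edgeFinset, SimpleGraph.mem_edgeSet] at this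
      rcases hadj with ⟨h1, h2 | h2⟩ | ⟨h1, h2 | h2⟩
      · exact Or.inl (Or.inr ⟨(congrArg Fin.val h1).symm, h2, hw⟩)
      · exact Or.inl (Or.inl (Or.inl ⟨(congrArg Fin.val h1).symm, h2, hw⟩))
      · exact Or.inr ⟨(congrArg Fin.val h1).symm, h2, hw⟩
      · exact Or.inl (Or.inl (Or.inr ⟨(congrArg Fin.val h1).symm, h2, hw⟩))
    · rintro (((⟨_, _, h⟩ | ⟨_, _, h⟩) | ⟨_, _, h⟩) | ⟨_, _, h⟩) <;> exact h
  have dLT : Disjoint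
      (Finset.univ.filter (fun w : Fin m × Fin n =>
        (w.1 : ℕ) = (v.1 : ℕ) ∧ (w.2 : ℕ) + 1 = (v.2 : ℕ) ∧ s(v, w) ∈ S))
      (Finset.univ.filter (fun w : Fin m × Fin n =>
        (w.2 : ℕ) = (v.2 : ℕ) ∧ (w.1 : ℕ) + 1 = (v.1 : ℕ) ∧ s(v, w) ∈ S)) := by
    rw [Finset.disjoint_left]
    intro w hw1 hw2
    simp only [Finset.mem_filter, Finset.mem_univ, true_and] at hw1 hw2
    obtain ⟨a1, a2, -⟩ := hw1; obtain ⟨b1, b2, -⟩ := hw2; omega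
  have dLR : Disjoint
      (Finset.univ.filter (fun w : Fin m × Fin n =>
        (w.1 : ℕ) = (v.1 : ℕ) ∧ (w.2 : ℕ) + 1 = (v.2 : ℕ) ∧ s(v, w) ∈ S))
      (Finset.univ.filter (fun w : Fin m × Fin n =>
        (w.1 : ℕ) = (v.1 : ℕ) ∧ (v.2 : ℕ) + 1 = (w.2 : ℕ) ∧ s(v, w) ∈ S)) := by
    rw [Finset.disjoint_left]
    intro w hw1 hw2
    simp only [Finset.mem_filter, Finset.mem_univ, true_and] at hw1 hw2
    obtain ⟨a1, a2, -⟩ := hw1; obtain ⟨b1, b2, -⟩ := hw2; omega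
  have dLB : Disjoint
      (Finset.univ.filter (fun w : Fin m × Fin n =>
        (w.1 : ℕ) = (v.1 : ℕ) ∧ (w.2 : ℕ) + 1 = (v.2 : ℕ) ∧ s(v, w) ∈ S))
      (Finset.univ.filter (fun w : Fin m × Fin n =>
        (w.2 : ℕ) = (v.2 : ℕ) ∧ (v.1 : ℕ) + 1 = (w.1 : ℕ) ∧ s(v, w) ∈ S)) := by
    rw [Finset.disjoint_left]
    intro w hw1 hw2
    simp only [Finset.mem_filter, Finset.mem_univ, true_and] at hw1 hw2
    obtain ⟨a1, a2, -⟩ := hw1; obtain ⟨b1, b2, -⟩ := hw2; omega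
  have dTR : Disjoint
      (Finset.univ.filter (fun w : Fin m × Fin n =>
        (w.2 : ℕ) = (v.2 : ℕ) ∧ (w.1 : ℕ) + 1 = (v.1 : ℕ) ∧ s(v, w) ∈ S))
      (Finset.univ.filter (fun w : Fin m × Fin n =>
        (w.1 : ℕ) = (v.1 : ℕ) ∧ (v.2 : ℕ) + 1 = (w.2 : ℕ) ∧ s(v, w) ∈ S)) := by
    rw [Finset.disjoint_left]
    intro w hw1 hw2
    simp only [Finset.mem_filter, Finset.mem_univ, true_and] at hw1 hw2
    obtain ⟨a1, a2, -⟩ := hw1; obtain ⟨b1, b2, -⟩ := hw2; omega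
  have dTB : Disjoint
      (Finset.univ.filter (fun w : Fin m × Fin n =>
        (w.2 : ℕ) = (v.2 : ℕ) ∧ (w.1 : ℕ) + 1 = (v.1 : ℕ) ∧ s(v, w) ∈ S))
      (Finset.univ.filter (fun w : Fin m × Fin n =>
        (w.2 : ℕ) = (v.2 : ℕ) ∧ (v.1 : ℕ) + 1 = (w.1 : ℕ) ∧ s(v, w) ∈ S)) := by
    rw [Finset.disjoint_left]
    intro w hw1 hw2
    simp only [Finset.mem_filter, Finset.mem_univ, true_and] at hw1 hw2
    obtain ⟨a1, a2, -⟩ := hw1; obtain ⟨b1, b2, -⟩ := hw2; omega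
  have dRB : Disjoint
      (Finset.univ.filter (fun w : Fin m × Fin n =>
        (w.1 : ℕ) = (v.1 : ℕ) ∧ (v.2 : ℕ) + 1 = (w.2 : ℕ) ∧ s(v, w) ∈ S))
      (Finset.univ.filter (fun w : Fin m × Fin n =>
        (w.2 : ℕ) = (v.2 : ℕ) ∧ (v.1 : ℕ) + 1 = (w.1 : ℕ) ∧ s(v, w) ∈ S)) := by
    rw [Finset.disjoint_left]
    intro w hw1 hw2
    simp only [Finset.mem_filter, Finset.mem_univ, true_and] at hw1 hw2
    obtain ⟨a1, a2, -⟩ := hw1; obtain ⟨b1, b2, -⟩ := hw2; omega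
  have cardL : (Finset.univ.filter (fun w : Fin m × Fin n =>
      (w.1 : ℕ) = (v.1 : ℕ) ∧ (w.2 : ℕ) + 1 = (v.2 : ℕ) ∧ s(v, w) ∈ S)).card
      = (decide (eL S v)).toNat := by
    by_cases h : eL S v
    · rw [decide_eq_true h]
      obtain ⟨w0, h1, h2, h3⟩ := h
      rw [show (Bool.toNat true) = 1 from rfl]
      apply Finset.card_eq_one.mpr
      refine ⟨w0, ?_⟩
      ext w
      simp only [Finset.mem_filter, Finset.mem_univ, true_and, Finset.mem_singleton]
      constructor
      · rintro ⟨a1, a2, a3⟩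
        exact Prod.ext_iff.mpr ⟨Fin.ext (by omega), Fin.ext (by omega)⟩
      · rintro rfl; exact ⟨h1, h2, h3⟩
    · rw [decide_eq_false h, show (Bool.toNat false) = 0 from rfl, Finset.card_eq_zero]
      apply Finset.filter_eq_empty_iff.mpr
      intro w _
      exact fun hw => h ⟨w, hw⟩
  have cardT : (Finset.univ.filter (fun w : Fin m × Fin n =>
      (w.2 : ℕ) = (v.2 : ℕ) ∧ (w.1 : ℕ) + 1 = (v.1 : ℕ) ∧ s(v, w) ∈ S)).card
      = (decide (eT S v)).toNat := by
    by_cases h : eT S v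
    · rw [decide_eq_true h]
      obtain ⟨w0, h1, h2, h3⟩ := h
      rw [show (Bool.toNat true) = 1 from rfl]
      apply Finset.card_eq_one.mpr
      refine ⟨w0, ?_⟩
      ext w
      simp only [Finset.mem_filter, Finset.mem_univ, true_and, Finset.mem_singleton]
      constructor
      · rintro ⟨a1, a2, a3⟩
        exact Prod.ext_iff.mpr ⟨Fin.ext (by omega), Fin.ext (by omega)⟩
      · rintro rfl; exact ⟨h1, h2, h3⟩
    · rw [decide_eq_false h, show (Bool.toNat false) = 0 from rfl, Finset.card_eq_zero]
      apply Finset.filter_eq_empty_iff.mpr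
      intro w _
      exact fun hw => h ⟨w, hw⟩
  have cardR : (Finset.univ.filter (fun w : Fin m × Fin n =>
      (w.1 : ℕ) = (v.1 : ℕ) ∧ (v.2 : ℕ) + 1 = (w.2 : ℕ) ∧ s(v, w) ∈ S)).card
      = (decide (eR S v)).toNat := by
    by_cases h : eR S v
    · rw [decide_eq_true h]
      obtain ⟨w0, h1, h2, h3⟩ := h
      rw [show (Bool.toNat true) = 1 from rfl]
      apply Finset.card_eq_one.mpr
      refine ⟨w0, ?_⟩
      ext w
      simp only [Finset.mem_filter, Finset.mem_univ, true_and, Finset.mem_singleton]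
      constructor
      · rintro ⟨a1, a2, a3⟩
        exact Prod.ext_iff.mpr ⟨Fin.ext (by omega), Fin.ext (by omega)⟩
      · rintro rfl; exact ⟨h1, h2, h3⟩
    · rw [decide_eq_false h, show (Bool.toNat false) = 0 from rfl, Finset.card_eq_zero]
      apply Finset.filter_eq_empty_iff.mpr
      intro w _
      exact fun hw => h ⟨w, hw⟩
  have cardB : (Finset.univ.filter (fun w : Fin m × Fin n =>
      (w.2 : ℕ) = (v.2 : ℕ) ∧ (v.1 : ℕ) + 1 = (w.1 : ℕ) ∧ s(v, w) ∈ S)).card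
      = (decide (eB S v)).toNat := by
    by_cases h : eB S v
    · rw [decide_eq_true h]
      obtain ⟨w0, h1, h2, h3⟩ := h
      rw [show (Bool.toNat true) = 1 from rfl]
      apply Finset.card_eq_one.mpr
      refine ⟨w0, ?_⟩
      ext w
      simp only [Finset.mem_filter, Finset.mem_univ, true_and, Finset.mem_singleton]
      constructor
      · rintro ⟨a1, a2, a3⟩
        exact Prod.ext_iff.mpr ⟨Fin.ext (by omega), Fin.ext (by omega)⟩
      · rintro rfl; exact ⟨h1, h2, h3⟩
    · rw [decide_eq_false h, show (Bool.toNat false) = 0 from rfl, Finset.card_eq_zero]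
      apply Finset.filter_eq_empty_iff.mpr
      intro w _
      exact fun hw => h ⟨w, hw⟩
  rw [hsplit,
    Finset.card_union_of_disjoint
      (Finset.disjoint_union_left.mpr ⟨Finset.disjoint_union_left.mpr ⟨dLB, dTB⟩, dRB⟩),
    Finset.card_union_of_disjoint (Finset.disjoint_union_left.mpr ⟨dLR, dTR⟩),
    Finset.card_union_of_disjoint dLT, cardL, cardT, cardR, cardB]

end MsapAux

namespace MsapAux
open Finset
variable {m n : ℕ}
-- tile layer
def mkTile : Bool → Bool → Bool → Bool → Tile
  | false, false, false, false => .T1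
  | true,  false, true,  false => .T2
  | false, false, true,  true  => .T3
  | false, true,  false, true  => .T4
  | true,  true,  false, false => .T5
  | true,  false, false, true  => .T6
  | false, true,  true,  false => .T7
  | _, _, _, _ => .T1

lemma cp_mkTile : ∀ a b c d : Bool,
    (a.toNat + b.toNat + c.toNat + d.toNat = 0 ∨ a.toNat + b.toNat + c.toNat + d.toNat = 2) →
    cpL (mkTile a b c d) = a ∧ cpT (mkTile a b c d) = b ∧
      cpR (mkTile a b c d) = c ∧ cpB (mkTile a b c d) = d := by decide

lemma mkTile_cp : ∀ X : Tile, mkTile (cpL X) (cpT X) (cpR X) (cpB X) = X := by decide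

lemma cp_sum : ∀ X : Tile,
    (cpL X).toNat + (cpT X).toNat + (cpR X).toNat + (cpB X).toNat = 0 ∨
    (cpL X).toNat + (cpT X).toNat + (cpR X).toNat + (cpB X).toNat = 2 := by decide

def toMosaic (S : ES m n) : Fin m → Fin n → Tile := fun i j =>
  mkTile (decide (eL S (i, j))) (decide (eT S (i, j))) (decide (eR S (i, j))) (decide (eB S (i, j)))

def qf (M : Fin m → Fin n → Tile) (a b : Fin m × Fin n) : Prop :=
  ((a.1 : ℕ) = (b.1 : ℕ) ∧ (a.2 : ℕ) + 1 = (b.2 : ℕ) ∧ cpR (M a.1 a.2) = true) ∨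
  ((a.2 : ℕ) = (b.2 : ℕ) ∧ (a.1 : ℕ) + 1 = (b.1 : ℕ) ∧ cpB (M a.1 a.2) = true)

instance (M : Fin m → Fin n → Tile) (a b : Fin m × Fin n) : Decidable (qf M a b) := by
  unfold qf; infer_instance

def toEdges (M : Fin m → Fin n → Tile) : ES m n :=
  (gridGraph m n).edgeFinset.filter (fun e =>
    Sym2.lift ⟨fun a b => decide (qf M a b ∨ qf M b a),
      fun a b => decide_eq_decide.mpr or_comm⟩ e = true)

lemma mem_toEdges (M : Fin m → Fin n → Tile) (a b : Fin m × Fin n) :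
    s(a, b) ∈ toEdges M ↔ gridAdj m n a b ∧ (qf M a b ∨ qf M b a) := by
  unfold toEdges
  rw [Finset.mem_filter, Sym2.lift_mk]
  simp only [decide_eq_true_eq, SimpleGraph.mem_edgeFinset, SimpleGraph.mem_edgeSet]
  exact Iff.rfl

end MsapAux

namespace MsapAux
open Finset
variable {m n : ℕ}

def Good (m n : ℕ) (S : ES m n) : Prop :=
  S ⊆ (gridGraph m n).edgeFinset ∧ ∀ v : Fin m × Fin n,
    (S.filter (fun e => v ∈ e)).card = 0 ∨ (S.filter (fun e => v ∈ e)).card = 2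

lemma cp_toMosaic (S : ES m n) (hG : Good m n S) (i : Fin m) (j : Fin n) :
    cpL (toMosaic S i j) = decide (eL S (i, j)) ∧
    cpT (toMosaic S i j) = decide (eT S (i, j)) ∧
    cpR (toMosaic S i j) = decide (eR S (i, j)) ∧
    cpB (toMosaic S i j) = decide (eB S (i, j)) := by
  apply cp_mkTile
  have h := hG.2 (i, j)
  rwa [degree_eq S hG.1 (i, j)] at h

lemma toMosaic_mosaic (S : ES m n) (hG : Good m n S) : IsPolygonMosaic m n (toMosaic S) := by
  refine ⟨?_, ?_, ?_⟩
  · intro i j j' hjj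
    rw [(cp_toMosaic S hG i j).2.2.1, (cp_toMosaic S hG i j').1]
    apply decide_eq_decide.mpr
    rw [eR_iff S (i, j) (i, j') rfl hjj, eL_iff S (i, j') (i, j) rfl hjj, Sym2.eq_swap]
  · intro i i' j hii
    rw [(cp_toMosaic S hG i j).2.2.2, (cp_toMosaic S hG i' j).2.1]
    apply decide_eq_decide.mpr
    rw [eB_iff S (i, j) (i', j) rfl hii, eT_iff S (i', j) (i, j) rfl hii, Sym2.eq_swap]
  · intro i j
    exact ⟨fun h0 => by
        rw [(cp_toMosaic S hG i j).1]; exact decide_eq_false (eL_false S (i, j) h0),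
      fun h0 => by
        rw [(cp_toMosaic S hG i j).2.2.1]; exact decide_eq_false (eR_false S (i, j) h0),
      fun h0 => by
        rw [(cp_toMosaic S hG i j).2.1]; exact decide_eq_false (eT_false S (i, j) h0),
      fun h0 => by
        rw [(cp_toMosaic S hG i j).2.2.2]; exact decide_eq_false (eB_false S (i, j) h0)⟩

lemma decide_eq_bool {p : Prop} [Decidable p] {b : Bool} (h : p ↔ b = true) : decide p = b := by
  cases b
  · exact decide_eq_false (fun hp => by simpa using h.mp hp)
  · exact decide_eq_true (h.mpr rfl)

lemma eR_toEdges (M : Fin m → Fin n → Tile) (hM : IsPolygonMosaic m n M) (i : Fin m) (j : Fin n) :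
    decide (eR (toEdges M) (i, j)) = cpR (M i j) := by
  by_cases h : (j : ℕ) + 1 < n
  · apply decide_eq_bool
    rw [eR_iff (toEdges M) (i, j) (i, ⟨(j : ℕ) + 1, h⟩) rfl rfl, mem_toEdges]
    constructor
    · rintro ⟨-, hq | hq⟩ <;>
        (simp only [qf] at hq;
         rcases hq with ⟨h1, h2, hc⟩ | ⟨h1, h2, hc⟩ <;>
           first | exact hc | (exfalso; omega))
    · intro hc
      refine ⟨Or.inl ⟨rfl, Or.inl rfl⟩, Or.inl ?_⟩
      unfold qf
      exact Or.inl ⟨rfl, rfl, hc⟩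
  · have hj : (j : ℕ) = n - 1 := by have := j.isLt; omega
    rw [(hM.2.2 i j).2.1 hj]
    exact decide_eq_false (eR_false (toEdges M) (i, j) hj)

lemma eB_toEdges (M : Fin m → Fin n → Tile) (hM : IsPolygonMosaic m n M) (i : Fin m) (j : Fin n) :
    decide (eB (toEdges M) (i, j)) = cpB (M i j) := by
  by_cases h : (i : ℕ) + 1 < m
  · apply decide_eq_bool
    rw [eB_iff (toEdges M) (i, j) (⟨(i : ℕ) + 1, h⟩, j) rfl rfl, mem_toEdges]
    constructor
    · rintro ⟨-, hq | hq⟩ <;>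
        (simp only [qf] at hq;
         rcases hq with ⟨h1, h2, hc⟩ | ⟨h1, h2, hc⟩ <;>
           first | exact hc | (exfalso; omega))
    · intro hc
      refine ⟨Or.inr ⟨rfl, Or.inl rfl⟩, Or.inl ?_⟩
      unfold qf
      exact Or.inr ⟨rfl, rfl, hc⟩
  · have hi : (i : ℕ) = m - 1 := by have := i.isLt; omega
    rw [(hM.2.2 i j).2.2.2 hi]
    exact decide_eq_false (eB_false (toEdges M) (i, j) hi)

lemma eL_toEdges (M : Fin m → Fin n → Tile) (hM : IsPolygonMosaic m n M) (i : Fin m) (j : Fin n) :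
    decide (eL (toEdges M) (i, j)) = cpL (M i j) := by
  by_cases h : 0 < (j : ℕ)
  · have hlt : (j : ℕ) - 1 < n := by have := j.isLt; omega
    have hconn : cpR (M i ⟨(j : ℕ) - 1, hlt⟩) = cpL (M i j) :=
      hM.1 i ⟨(j : ℕ) - 1, hlt⟩ j (show (j : ℕ) - 1 + 1 = (j : ℕ) by omega)
    rw [← hconn]
    apply decide_eq_bool
    rw [eL_iff (toEdges M) (i, j) (i, ⟨(j : ℕ) - 1, hlt⟩) rfl
      (show (j : ℕ) - 1 + 1 = (j : ℕ) by omega), mem_toEdges]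
    constructor
    · rintro ⟨-, hq | hq⟩ <;>
        (simp only [qf] at hq;
         rcases hq with ⟨h1, h2, hc⟩ | ⟨h1, h2, hc⟩ <;>
           first | exact hc | (exfalso; omega))
    · intro hc
      refine ⟨Or.inl ⟨rfl, Or.inr (show (j : ℕ) - 1 + 1 = (j : ℕ) by omega)⟩, Or.inr ?_⟩
      unfold qf
      exact Or.inl ⟨rfl, show (j : ℕ) - 1 + 1 = (j : ℕ) by omega, hc⟩
  · have hj : (j : ℕ) = 0 := by omega
    rw [(hM.2.2 i j).1 hj]
    exact decide_eq_false (eL_false (toEdges M) (i, j) hj)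

lemma eT_toEdges (M : Fin m → Fin n → Tile) (hM : IsPolygonMosaic m n M) (i : Fin m) (j : Fin n) :
    decide (eT (toEdges M) (i, j)) = cpT (M i j) := by
  by_cases h : 0 < (i : ℕ)
  · have hlt : (i : ℕ) - 1 < m := by have := i.isLt; omega
    have hconn : cpB (M ⟨(i : ℕ) - 1, hlt⟩ j) = cpT (M i j) :=
      hM.2.1 ⟨(i : ℕ) - 1, hlt⟩ i j (show (i : ℕ) - 1 + 1 = (i : ℕ) by omega)
    rw [← hconn]
    apply decide_eq_bool
    rw [eT_iff (toEdges M) (i, j) (⟨(i : ℕ) - 1, hlt⟩, j) rfl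
      (show (i : ℕ) - 1 + 1 = (i : ℕ) by omega), mem_toEdges]
    constructor
    · rintro ⟨-, hq | hq⟩ <;>
        (simp only [qf] at hq;
         rcases hq with ⟨h1, h2, hc⟩ | ⟨h1, h2, hc⟩ <;>
           first | exact hc | (exfalso; omega))
    · intro hc
      refine ⟨Or.inr ⟨rfl, Or.inr (show (i : ℕ) - 1 + 1 = (i : ℕ) by omega)⟩, Or.inr ?_⟩
      unfold qf
      exact Or.inr ⟨rfl, show (i : ℕ) - 1 + 1 = (i : ℕ) by omega, hc⟩
  · have hi : (i : ℕ) = 0 := by omega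
    rw [(hM.2.2 i j).2.2.1 hi]
    exact decide_eq_false (eT_false (toEdges M) (i, j) hi)

lemma toMosaic_toEdges (M : Fin m → Fin n → Tile) (hM : IsPolygonMosaic m n M) :
    toMosaic (toEdges M) = M := by
  funext i j
  show mkTile _ _ _ _ = M i j
  rw [eL_toEdges M hM i j, eT_toEdges M hM i j, eR_toEdges M hM i j, eB_toEdges M hM i j]
  exact mkTile_cp (M i j)

lemma good_toEdges (M : Fin m → Fin n → Tile) (hM : IsPolygonMosaic m n M) :
    Good m n (toEdges M) := by
  refine ⟨Finset.filter_subset _ _, ?_⟩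
  rintro ⟨i, j⟩
  rw [degree_eq (toEdges M) (show toEdges M ⊆ (gridGraph m n).edgeFinset from Finset.filter_subset _ _) (i, j)]
  rw [eL_toEdges M hM i j, eT_toEdges M hM i j, eR_toEdges M hM i j, eB_toEdges M hM i j]
  exact cp_sum (M i j)

lemma toEdges_toMosaic (S : ES m n) (hG : Good m n S) : toEdges (toMosaic S) = S := by
  ext e
  induction e using Sym2.ind with
  | _ a b =>
    rw [mem_toEdges]
    constructor
    · rintro ⟨hadj, hq⟩
      simp only [qf] at hq
      rcases hq with (⟨h1, h2, hc⟩ | ⟨h1, h2, hc⟩) | (⟨h1, h2, hc⟩ | ⟨h1, h2, hc⟩)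
      · rw [(cp_toMosaic S hG a.1 a.2).2.2.1, decide_eq_true_eq] at hc
        have := (eR_iff S (a.1, a.2) b h1.symm h2).mp hc
        rwa [Prod.mk.eta] at this
      · rw [(cp_toMosaic S hG a.1 a.2).2.2.2, decide_eq_true_eq] at hc
        have := (eB_iff S (a.1, a.2) b h1.symm h2).mp hc
        rwa [Prod.mk.eta] at this
      · rw [(cp_toMosaic S hG b.1 b.2).2.2.1, decide_eq_true_eq] at hc
        have := (eR_iff S (b.1, b.2) a h1.symm h2).mp hc
        rw [Prod.mk.eta] at this
        rwa [Sym2.eq_swap]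
      · rw [(cp_toMosaic S hG b.1 b.2).2.2.2, decide_eq_true_eq] at hc
        have := (eB_iff S (b.1, b.2) a h1.symm h2).mp hc
        rw [Prod.mk.eta] at this
        rwa [Sym2.eq_swap]
    · intro hS
      have hadj : gridAdj m n a b := by
        have := hG.1 hS
        rwa [SimpleGraph.mem_edgeFinset, SimpleGraph.mem_edgeSet] at this
      refine ⟨hadj, ?_⟩
      simp only [qf]
      rcases hadj with ⟨h1, h2 | h2⟩ | ⟨h1, h2 | h2⟩
      · refine Or.inl (Or.inl ⟨congrArg Fin.val h1, h2, ?_⟩)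
        rw [(cp_toMosaic S hG a.1 a.2).2.2.1, decide_eq_true_eq]
        refine (eR_iff S (a.1, a.2) b (congrArg Fin.val h1).symm h2).mpr ?_
        rwa [Prod.mk.eta]
      · refine Or.inr (Or.inl ⟨(congrArg Fin.val h1).symm, h2, ?_⟩)
        rw [(cp_toMosaic S hG b.1 b.2).2.2.1, decide_eq_true_eq]
        refine (eR_iff S (b.1, b.2) a (congrArg Fin.val h1) h2).mpr ?_
        rw [Prod.mk.eta, Sym2.eq_swap]
        exact hS
      · refine Or.inl (Or.inr ⟨congrArg Fin.val h1, h2, ?_⟩)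
        rw [(cp_toMosaic S hG a.1 a.2).2.2.2, decide_eq_true_eq]
        refine (eB_iff S (a.1, a.2) b (congrArg Fin.val h1).symm h2).mpr ?_
        rwa [Prod.mk.eta]
      · refine Or.inr (Or.inr ⟨(congrArg Fin.val h1).symm, h2, ?_⟩)
        rw [(cp_toMosaic S hG b.1 b.2).2.2.2, decide_eq_true_eq]
        refine (eB_iff S (b.1, b.2) a (congrArg Fin.val h1) h2).mpr ?_
        rw [Prod.mk.eta, Sym2.eq_swap]
        exact hS

lemma toMosaic_empty : toMosaic (∅ : ES m n) = fun _ _ => Tile.T1 := by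
  funext i j
  have h1 : ¬ eL (∅ : ES m n) (i, j) := by
    rintro ⟨w, -, -, hw⟩; exact absurd hw (Finset.notMem_empty _)
  have h2 : ¬ eT (∅ : ES m n) (i, j) := by
    rintro ⟨w, -, -, hw⟩; exact absurd hw (Finset.notMem_empty _)
  have h3 : ¬ eR (∅ : ES m n) (i, j) := by
    rintro ⟨w, -, -, hw⟩; exact absurd hw (Finset.notMem_empty _)
  have h4 : ¬ eB (∅ : ES m n) (i, j) := by
    rintro ⟨w, -, -, hw⟩; exact absurd hw (Finset.notMem_empty _)
  show mkTile _ _ _ _ = Tile.T1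
  rw [decide_eq_false h1, decide_eq_false h2, decide_eq_false h3, decide_eq_false h4]
  rfl

lemma toEdges_T1 : toEdges (fun _ _ => Tile.T1 : Fin m → Fin n → Tile) = ∅ := by
  ext e
  induction e using Sym2.ind with
  | _ a b =>
    rw [mem_toEdges]
    simp [qf, show cpR Tile.T1 = false from rfl, show cpB Tile.T1 = false from rfl]

lemma good_empty : Good m n (∅ : ES m n) :=
  ⟨Finset.empty_subset _, fun v => Or.inl (by simp)⟩

def goodFinset (m n : ℕ) : Finset (ES m n) :=
  ((gridGraph m n).edgeFinset.powerset).filter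
    (fun S => ∀ v : Fin m × Fin n,
      (S.filter (fun e => v ∈ e)).card = 0 ∨ (S.filter (fun e => v ∈ e)).card = 2)

lemma mem_goodFinset {S : ES m n} : S ∈ goodFinset m n ↔ Good m n S := by
  simp only [goodFinset, Finset.mem_filter, Finset.mem_powerset, Good]

lemma mem_msapFinset {S : ES m n} : S ∈ msapFinset m n ↔ Good m n S ∧ S ≠ ∅ := by
  simp only [msapFinset, Finset.mem_filter, Finset.mem_powerset, Good]
  tauto

lemma mem_polygonMosaics {M : Fin m → Fin n → Tile} :
    M ∈ polygonMosaics m n ↔ IsPolygonMosaic m n M := by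
  simp [polygonMosaics]

def E (m n : ℕ) : {S // S ∈ goodFinset m n} ≃ {M // M ∈ polygonMosaics m n} where
  toFun S := ⟨toMosaic S.1, mem_polygonMosaics.mpr (toMosaic_mosaic S.1 (mem_goodFinset.mp S.2))⟩
  invFun M := ⟨toEdges M.1, mem_goodFinset.mpr (good_toEdges M.1 (mem_polygonMosaics.mp M.2))⟩
  left_inv S := Subtype.ext (toEdges_toMosaic S.1 (mem_goodFinset.mp S.2))
  right_inv M := Subtype.ext (toMosaic_toEdges M.1 (mem_polygonMosaics.mp M.2))

set_option maxHeartbeats 1000000 in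
def E' (m n : ℕ) : {S // S ∈ msapFinset m n} ≃
    {M // M ∈ polygonMosaics m n ∧ M ≠ fun _ _ => Tile.T1} where
  toFun S := ⟨toMosaic S.1, by
    obtain ⟨hG, hne⟩ := mem_msapFinset.mp S.2
    refine ⟨mem_polygonMosaics.mpr (toMosaic_mosaic _ hG), fun hT1 => hne ?_⟩
    have h := toEdges_toMosaic S.1 hG
    rw [hT1, toEdges_T1] at h
    exact h.symm⟩
  invFun M := ⟨toEdges M.1, by
    obtain ⟨hMos, hne⟩ := M.2
    have hM := mem_polygonMosaics.mp hMos
    refine mem_msapFinset.mpr ⟨good_toEdges _ hM, fun hemp => hne ?_⟩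
    have h := toMosaic_toEdges M.1 hM
    rw [hemp, toMosaic_empty] at h
    exact h.symm⟩
  left_inv S := Subtype.ext (toEdges_toMosaic S.1 (mem_msapFinset.mp S.2).1)
  right_inv M := Subtype.ext (toMosaic_toEdges M.1 (mem_polygonMosaics.mp M.2.1))

lemma card_polygonMosaics_eq (m n : ℕ) :
    (polygonMosaics m n).card = (goodFinset m n).card := by
  rw [← Fintype.card_coe, ← Fintype.card_coe]
  exact Fintype.card_congr (E m n).symm

lemma msap_eq_erase (m n : ℕ) : msapFinset m n = (goodFinset m n).erase ∅ := by
  ext S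
  rw [Finset.mem_erase, mem_msapFinset, mem_goodFinset]
  tauto

end MsapAux

/-- There is a bijection between MSAPs in the m×n grid and nontrivial polygon
(m,n)-mosaics; in particular the number of polygon (m,n)-mosaics is p_{m×n} + 1. -/
theorem msap_mosaic_correspondence (m n : ℕ) (hm : 1 ≤ m) (hn : 1 ≤ n) :
    Nonempty ({ S // S ∈ msapFinset m n } ≃
      { M // M ∈ polygonMosaics m n ∧ M ≠ fun _ _ => Tile.T1 }) ∧
    (polygonMosaics m n).card = msapCount m n + 1 := by
  refine ⟨⟨MsapAux.E' m n⟩, ?_⟩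
  rw [MsapAux.card_polygonMosaics_eq, msapCount, MsapAux.msap_eq_erase]
  exact (Finset.card_erase_add_one (MsapAux.mem_goodFinset.mpr MsapAux.good_empty)).symm
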